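/- Let G = G(H_0; B_1,...,B_p) be a B-grafted graph. Then X = X_1 ∪ ... ∪ X_p is a minimal vertex cover of G and Y = Y_1 ∪ ... ∪ Y_p is a maximal independent set of G; in particular the minimum vertex cover size of G is at most #X = n_1 + ... + n_p. -/

import Mathlib

open SimpleGraph

/-- `C` is a vertex cover of `G`. -/
def IsVC {V : Type*} (G : SimpleGraph V) (C : Set V) : Prop :=
  ∀ ⦃u v : V⦄, G.Adj u v → u ∈ C ∨ v ∈ C

/-- `C` is a minimal (inclusion-wise) vertex cover of `G`. -/
def IsMinVC {V : Type*} (G : SimpleGraph V) (C : Set V) : Prop :=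
  IsVC G C ∧ ∀ C' : Set V, C' ⊆ C → IsVC G C' → C' = C

/-- `A` is an independent set of `G`. -/
def IsIndep {V : Type*} (G : SimpleGraph V) (A : Set V) : Prop :=
  ∀ ⦃u v : V⦄, u ∈ A → v ∈ A → ¬ G.Adj u v

/-- `A` is a maximal independent set of `G`. -/
def IsMaxIndep {V : Type*} (G : SimpleGraph V) (A : Set V) : Prop :=
  IsIndep G A ∧ ∀ A' : Set V, A ⊆ A' → IsIndep G A' → A' = A

/-- `G` is unmixed: all minimal vertex covers have the same cardinality. -/
def Unmixed {V : Type*} (G : SimpleGraph V) : Prop :=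
  ∀ C₁ C₂ : Set V, IsMinVC G C₁ → IsMinVC G C₂ → C₁.ncard = C₂.ncard

/-- The B-grafted graph `G(H₀; B_1, …, B_p)`. Vertices: `X = Σ i, X_i` (left) and
`Y = Σ i, Y_i` (right), where `X_i = Y_i = Fin (n i)`. The relation `b` records the edges
of the bipartite graphs `B_i` (an `X_i`-vertex and a `Y_i`-vertex with the same index `i`).
Edges of `G`: `x x'` for `x ∈ X_i`, `x' ∈ X_j` with `ij ∈ E(H₀)`, and `x y` for
`x ∈ X_i`, `y ∈ Y_i` with `xy ∈ E(B_i)`. -/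
def BGraft {p : ℕ} (H0 : SimpleGraph (Fin p)) {n : Fin p → ℕ}
    (b : (Σ i : Fin p, Fin (n i)) → (Σ i : Fin p, Fin (n i)) → Prop) :
    SimpleGraph ((Σ i : Fin p, Fin (n i)) ⊕ (Σ i : Fin p, Fin (n i))) where
  Adj u v :=
    match u, v with
    | Sum.inl a, Sum.inl a' => H0.Adj a.1 a'.1
    | Sum.inl a, Sum.inr c => a.1 = c.1 ∧ b a c
    | Sum.inr c, Sum.inl a => a.1 = c.1 ∧ b a c
    | Sum.inr _, Sum.inr _ => False
  symm := by
    constructor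
    rintro (a | c) (a' | c') h
    · exact H0.adj_symm h
    · exact h
    · exact h
    · exact h.elim
  loopless := by
    constructor
    rintro (a | c) h
    · exact H0.irrefl h
    · exact h

/-- The bipartite graph `B_i`, on vertex set `X_i ⊕ Y_i`. -/
def BiGraph {p : ℕ} {n : Fin p → ℕ}
    (b : (Σ i : Fin p, Fin (n i)) → (Σ i : Fin p, Fin (n i)) → Prop) (i : Fin p) :
    SimpleGraph (Fin (n i) ⊕ Fin (n i)) where
  Adj u v :=
    match u, v with
    | Sum.inl a, Sum.inr c => b ⟨i, a⟩ ⟨i, c⟩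
    | Sum.inr c, Sum.inl a => b ⟨i, a⟩ ⟨i, c⟩
    | _, _ => False
  symm := by constructor; rintro (a | c) (a' | c') h <;> exact h
  loopless := by constructor; rintro (a | c) h <;> exact h

/-- In the B-grafted graph `G(H₀; B_1,…,B_p)` (with the `B_i` having no isolated vertices),
`X` is a minimal vertex cover and `Y` is a maximal independent set; in particular the
minimum vertex cover size is at most `#X = n_1 + ⋯ + n_p`. -/
theorem bgraft_cover_indep {p : ℕ} (H0 : SimpleGraph (Fin p)) {n : Fin p → ℕ}
    (b : (Σ i : Fin p, Fin (n i)) → (Σ i : Fin p, Fin (n i)) → Prop)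
    (hb1 : ∀ (i : Fin p) (a : Fin (n i)), ∃ c : Fin (n i), b ⟨i, a⟩ ⟨i, c⟩)
    (hb2 : ∀ (i : Fin p) (c : Fin (n i)), ∃ a : Fin (n i), b ⟨i, a⟩ ⟨i, c⟩) :
    IsMinVC (BGraft H0 b) (Set.range Sum.inl) ∧
      IsMaxIndep (BGraft H0 b) (Set.range Sum.inr) ∧
      (Set.range (Sum.inl : (Σ i : Fin p, Fin (n i)) →
          (Σ i : Fin p, Fin (n i)) ⊕ (Σ i : Fin p, Fin (n i)))).ncard = ∑ i : Fin p, n i := by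
  refine ⟨⟨?_, ?_⟩, ⟨?_, ?_⟩, ?_⟩
  · rintro (a | c) (a' | c') h
    · exact Or.inl ⟨a, rfl⟩
    · exact Or.inl ⟨a, rfl⟩
    · exact Or.inr ⟨a', rfl⟩
    · exact h.elim
  · intro C' hsub hvc
    apply Set.Subset.antisymm hsub
    rintro _ ⟨a, rfl⟩
    obtain ⟨c, hc⟩ := hb1 a.1 a.2
    have hadj : (BGraft H0 b).Adj (Sum.inl a) (Sum.inr ⟨a.1, c⟩) := ⟨rfl, hc⟩
    rcases hvc hadj with h | h
    · exact h
    · obtain ⟨x, hx⟩ := hsub h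
      exact absurd hx (by simp)
  · rintro _ _ ⟨c, rfl⟩ ⟨c', rfl⟩ h
    exact h
  · intro A' hsub hind
    apply Set.Subset.antisymm _ hsub
    rintro (a | c) hmem
    · obtain ⟨c, hc⟩ := hb1 a.1 a.2
      have hadj : (BGraft H0 b).Adj (Sum.inl a) (Sum.inr ⟨a.1, c⟩) := ⟨rfl, hc⟩
      exact absurd hadj (hind hmem (hsub ⟨⟨a.1, c⟩, rfl⟩))
    · exact ⟨c, rfl⟩
  · rw [Set.ncard_eq_toFinset_card', Set.toFinset_range]
    rw [Finset.card_image_of_injective _ Sum.inl_injective]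
    simp [Fintype.card_sigma]
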